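/- For every α ∈ Λ²₇ one has α ∧ α ∧ φ₀ = 2·|α|²·vol₇, where |α|² is the sum of the squares of the coefficients of α in the standard basis of 2-forms e*_i ∧ e*_j (i < j) dual to the coordinate basis of ℝ⁷. -/

import Mathlib

/- STATEMENT 2: for every α ∈ Λ²₇ one has α ∧ α ∧ φ₀ = 2·|α|²·vol₇, where |α|² is the sum
of the squares of the coefficients of α in the standard basis e*_i ∧ e*_j (i < j) of 2-forms.

We identify `(ℝ⁷)*` with `ℝ⁷` via the standard basis, so forms are elements of the exterior
algebra of `V7 = Fin 7 → ℝ` (wedge = multiplication).  A general 2-form is written (uniquely)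
as `∑_{i<j} a i j • (ε i * ε j)`, and we quantify over its coefficient functions `a`. -/

noncomputable section
open ExteriorAlgebra

abbrev V7 : Type := Fin 7 → ℝ
abbrev E7 : Type := ExteriorAlgebra ℝ V7

def ε (i : Fin 7) : E7 := ExteriorAlgebra.ι ℝ (Pi.single i 1)

/-- Contraction (interior product) `ι_v` with the vector `v`, in the first slot. -/
def ctr (v : V7) : E7 →ₗ[ℝ] E7 :=
  CliffordAlgebra.contractLeft ((Pi.basisFun ℝ (Fin 7)).toDual v)

def ω : E7 := ε 1 * ε 2 + ε 3 * ε 4 + ε 5 * ε 6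
def ρ : E7 := -(ε 2 * ε 4 * ε 6) + ε 2 * ε 3 * ε 5 + ε 1 * ε 4 * ε 5 + ε 1 * ε 3 * ε 6
def φ₀ : E7 := ω * ε 0 + ρ
def vol7 : E7 := ε 0 * ε 1 * ε 2 * ε 3 * ε 4 * ε 5 * ε 6

/-- The linear map `v ↦ ι_vφ₀`. -/
def iotaPhi : V7 →ₗ[ℝ] E7 :=
  ((CliffordAlgebra.contractLeft (Q := (0 : QuadraticForm ℝ V7))).flip φ₀) ∘ₗ
    (Pi.basisFun ℝ (Fin 7)).toDual

/-- `Λ²₇ = {ι_vφ₀ : v ∈ ℝ⁷}`. -/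
def Λ27 : Submodule ℝ E7 := LinearMap.range iotaPhi

/-! ### Auxiliary lemmas -/

lemma eps_sq (i : Fin 7) : ε i * ε i = 0 := ι_sq_zero _

lemma eps_sq' (i : Fin 7) (x : E7) : ε i * (ε i * x) = 0 := by
  rw [← mul_assoc, eps_sq, zero_mul]

lemma eps_swap (i j : Fin 7) (_h : j < i) : ε i * ε j = -(ε j * ε i) := by
  have := ExteriorAlgebra.ι_add_mul_swap (R := ℝ) (M := V7) (Pi.single i (1:ℝ)) (Pi.single j 1)
  unfold ε; exact eq_neg_of_add_eq_zero_left this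

lemma eps_swap' (i j : Fin 7) (x : E7) (h : j < i) :
    ε i * (ε j * x) = -(ε j * (ε i * x)) := by
  rw [← mul_assoc, eps_swap i j h, ← mul_assoc, neg_mul]

lemma ctr_eps (v : V7) (i : Fin 7) : ctr v (ε i) = algebraMap ℝ E7 (v i) := by
  unfold ctr ε
  rw [show ExteriorAlgebra.ι ℝ (Pi.single i (1:ℝ))
      = CliffordAlgebra.ι (0 : QuadraticForm ℝ V7) (Pi.single i 1) from rfl,
    CliffordAlgebra.contractLeft_ι]
  congr 1
  have : (Pi.single i (1:ℝ)) = (Pi.basisFun ℝ (Fin 7)) i := by simp [Pi.basisFun_apply]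
  rw [this, Module.Basis.toDual_apply_left, Pi.basisFun_repr]

lemma ctr_eps_mul (v : V7) (i : Fin 7) (x : E7) :
    ctr v (ε i * x) = v i • x - ε i * ctr v x := by
  unfold ctr ε
  rw [show ExteriorAlgebra.ι ℝ (Pi.single i (1:ℝ))
      = CliffordAlgebra.ι (0 : QuadraticForm ℝ V7) (Pi.single i 1) from rfl,
    CliffordAlgebra.contractLeft_ι_mul]
  congr 2
  have : (Pi.single i (1:ℝ)) = (Pi.basisFun ℝ (Fin 7)) i := by simp [Pi.basisFun_apply]
  rw [this, Module.Basis.toDual_apply_left, Pi.basisFun_repr]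

/-- The explicit form of `ι_vφ₀`. -/
def Eform (v : V7) : E7 :=
  v 0 • (ε 1 * ε 2) + v 0 • (ε 3 * ε 4) + v 0 • (ε 5 * ε 6)
    - v 1 • (ε 0 * ε 2) + v 1 • (ε 4 * ε 5) + v 1 • (ε 3 * ε 6)
    + v 2 • (ε 0 * ε 1) - v 2 • (ε 4 * ε 6) + v 2 • (ε 3 * ε 5)
    - v 3 • (ε 0 * ε 4) - v 3 • (ε 2 * ε 5) - v 3 • (ε 1 * ε 6)
    + v 4 • (ε 0 * ε 3) + v 4 • (ε 2 * ε 6) - v 4 • (ε 1 * ε 5)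
    - v 5 • (ε 0 * ε 6) + v 5 • (ε 2 * ε 3) + v 5 • (ε 1 * ε 4)
    + v 6 • (ε 0 * ε 5) - v 6 • (ε 2 * ε 4) + v 6 • (ε 1 * ε 3)

lemma ctr_phi (v : V7) : ctr v φ₀ = Eform v := by
  unfold φ₀ ω ρ Eform
  simp only [add_mul, mul_assoc, map_add, map_neg, ctr_eps_mul, ctr_eps,
    Algebra.algebraMap_eq_smul_one, mul_smul_comm, smul_mul_assoc, mul_one,
    smul_sub, smul_add, smul_smul, mul_sub, sub_mul]
  simp (config := { decide := true }) only [eps_sq, eps_sq', eps_swap, eps_swap',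
    smul_neg, smul_zero, neg_neg, neg_zero, sub_eq_add_neg]
  module

set_option maxHeartbeats 4000000 in
lemma bigcalc (v : V7) :
    Eform v * Eform v * φ₀
      = (6 * (v 0^2 + v 1^2 + v 2^2 + v 3^2 + v 4^2 + v 5^2 + v 6^2)) • vol7 := by
  unfold Eform
  simp only [φ₀, ω, ρ, vol7, mul_add, add_mul, sub_mul, mul_sub, neg_mul, mul_neg,
    smul_mul_assoc, mul_smul_comm, mul_assoc]
  simp (config := { decide := true }) only [eps_sq, eps_sq', eps_swap, eps_swap',
    smul_neg, smul_zero, zero_mul, mul_zero, add_zero, zero_add, neg_neg, mul_neg, neg_mul,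
    neg_zero, smul_smul, sub_eq_add_neg]
  module

/-- Coefficient-extraction functional. -/
def coef (i j : Fin 7) : E7 →ₗ[ℝ] ℝ :=
  (ExteriorAlgebra.algebraMapInv).toLinearMap ∘ₗ ctr (Pi.single j 1) ∘ₗ ctr (Pi.single i 1)

lemma coef_eps (i j k l : Fin 7) :
    coef i j (ε k * ε l)
      = (if k = i then (1:ℝ) else 0) * (if l = j then 1 else 0)
        - (if l = i then (1:ℝ) else 0) * (if k = j then 1 else 0) := by
  simp only [coef, LinearMap.comp_apply, AlgHom.toLinearMap_apply,
    ctr_eps_mul, ctr_eps, map_sub, map_smul,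
    Algebra.algebraMap_eq_smul_one, mul_smul_comm, mul_one, smul_sub, smul_smul]
  simp [ctr_eps, Pi.single_apply, Algebra.algebraMap_eq_smul_one, smul_smul, mul_comm]

set_option maxHeartbeats 4000000 in
theorem stmt2 (a : Fin 7 → Fin 7 → ℝ)
    (hα : (∑ i, ∑ j, if i < j then a i j • (ε i * ε j) else 0) ∈ Λ27) :
    (∑ i, ∑ j, if i < j then a i j • (ε i * ε j) else 0) *
        (∑ i, ∑ j, if i < j then a i j • (ε i * ε j) else 0) * φ₀ =
      (2 * ∑ i, ∑ j, if i < j then (a i j) ^ 2 else 0) • vol7 := by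
  obtain ⟨v, hv⟩ := hα
  have hiota : iotaPhi v = ctr v φ₀ := rfl
  have hS : (∑ i, ∑ j, if i < j then a i j • (ε i * ε j) else 0) = Eform v := by
    rw [← hv, hiota, ctr_phi]
  have hS' : (a 0 1 • (ε 0 * ε 1) + a 0 2 • (ε 0 * ε 2) + a 0 3 • (ε 0 * ε 3)
      + a 0 4 • (ε 0 * ε 4) + a 0 5 • (ε 0 * ε 5) + a 0 6 • (ε 0 * ε 6)
      + a 1 2 • (ε 1 * ε 2) + a 1 3 • (ε 1 * ε 3) + a 1 4 • (ε 1 * ε 4)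
      + a 1 5 • (ε 1 * ε 5) + a 1 6 • (ε 1 * ε 6)
      + a 2 3 • (ε 2 * ε 3) + a 2 4 • (ε 2 * ε 4) + a 2 5 • (ε 2 * ε 5) + a 2 6 • (ε 2 * ε 6)
      + a 3 4 • (ε 3 * ε 4) + a 3 5 • (ε 3 * ε 5) + a 3 6 • (ε 3 * ε 6)
      + a 4 5 • (ε 4 * ε 5) + a 4 6 • (ε 4 * ε 6) + a 5 6 • (ε 5 * ε 6)) = Eform v := by
    rw [← hS]
    simp only [Fin.sum_univ_seven, Fin.reduceLT, reduceIte, add_zero, zero_add, Fin.isValue]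
    abel
  have hc : ∀ i j : Fin 7, i < j → coef i j
      (a 0 1 • (ε 0 * ε 1) + a 0 2 • (ε 0 * ε 2) + a 0 3 • (ε 0 * ε 3)
      + a 0 4 • (ε 0 * ε 4) + a 0 5 • (ε 0 * ε 5) + a 0 6 • (ε 0 * ε 6)
      + a 1 2 • (ε 1 * ε 2) + a 1 3 • (ε 1 * ε 3) + a 1 4 • (ε 1 * ε 4)
      + a 1 5 • (ε 1 * ε 5) + a 1 6 • (ε 1 * ε 6)
      + a 2 3 • (ε 2 * ε 3) + a 2 4 • (ε 2 * ε 4) + a 2 5 • (ε 2 * ε 5) + a 2 6 • (ε 2 * ε 6)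
      + a 3 4 • (ε 3 * ε 4) + a 3 5 • (ε 3 * ε 5) + a 3 6 • (ε 3 * ε 6)
      + a 4 5 • (ε 4 * ε 5) + a 4 6 • (ε 4 * ε 6) + a 5 6 • (ε 5 * ε 6))
      = coef i j (Eform v) := fun i j _ => by rw [hS']
  have h01 : a 0 1 = v 2 := by
    have := hc 0 1 (by decide)
    simp [map_add, map_sub, map_smul, coef_eps, Eform, smul_eq_mul] at this; linarith
  have h02 : a 0 2 = -v 1 := by
    have := hc 0 2 (by decide)
    simp [map_add, map_sub, map_smul, coef_eps, Eform, smul_eq_mul] at this; linarith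
  have h03 : a 0 3 = v 4 := by
    have := hc 0 3 (by decide)
    simp [map_add, map_sub, map_smul, coef_eps, Eform, smul_eq_mul] at this; linarith
  have h04 : a 0 4 = -v 3 := by
    have := hc 0 4 (by decide)
    simp [map_add, map_sub, map_smul, coef_eps, Eform, smul_eq_mul] at this; linarith
  have h05 : a 0 5 = v 6 := by
    have := hc 0 5 (by decide)
    simp [map_add, map_sub, map_smul, coef_eps, Eform, smul_eq_mul] at this; linarith
  have h06 : a 0 6 = -v 5 := by
    have := hc 0 6 (by decide)
    simp [map_add, map_sub, map_smul, coef_eps, Eform, smul_eq_mul] at this; linarith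
  have h12 : a 1 2 = v 0 := by
    have := hc 1 2 (by decide)
    simp [map_add, map_sub, map_smul, coef_eps, Eform, smul_eq_mul] at this; linarith
  have h13 : a 1 3 = v 6 := by
    have := hc 1 3 (by decide)
    simp [map_add, map_sub, map_smul, coef_eps, Eform, smul_eq_mul] at this; linarith
  have h14 : a 1 4 = v 5 := by
    have := hc 1 4 (by decide)
    simp [map_add, map_sub, map_smul, coef_eps, Eform, smul_eq_mul] at this; linarith
  have h15 : a 1 5 = -v 4 := by
    have := hc 1 5 (by decide)
    simp [map_add, map_sub, map_smul, coef_eps, Eform, smul_eq_mul] at this; linarith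
  have h16 : a 1 6 = -v 3 := by
    have := hc 1 6 (by decide)
    simp [map_add, map_sub, map_smul, coef_eps, Eform, smul_eq_mul] at this; linarith
  have h23 : a 2 3 = v 5 := by
    have := hc 2 3 (by decide)
    simp [map_add, map_sub, map_smul, coef_eps, Eform, smul_eq_mul] at this; linarith
  have h24 : a 2 4 = -v 6 := by
    have := hc 2 4 (by decide)
    simp [map_add, map_sub, map_smul, coef_eps, Eform, smul_eq_mul] at this; linarith
  have h25 : a 2 5 = -v 3 := by
    have := hc 2 5 (by decide)
    simp [map_add, map_sub, map_smul, coef_eps, Eform, smul_eq_mul] at this; linarith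
  have h26 : a 2 6 = v 4 := by
    have := hc 2 6 (by decide)
    simp [map_add, map_sub, map_smul, coef_eps, Eform, smul_eq_mul] at this; linarith
  have h34 : a 3 4 = v 0 := by
    have := hc 3 4 (by decide)
    simp [map_add, map_sub, map_smul, coef_eps, Eform, smul_eq_mul] at this; linarith
  have h35 : a 3 5 = v 2 := by
    have := hc 3 5 (by decide)
    simp [map_add, map_sub, map_smul, coef_eps, Eform, smul_eq_mul] at this; linarith
  have h36 : a 3 6 = v 1 := by
    have := hc 3 6 (by decide)
    simp [map_add, map_sub, map_smul, coef_eps, Eform, smul_eq_mul] at this; linarith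
  have h45 : a 4 5 = v 1 := by
    have := hc 4 5 (by decide)
    simp [map_add, map_sub, map_smul, coef_eps, Eform, smul_eq_mul] at this; linarith
  have h46 : a 4 6 = -v 2 := by
    have := hc 4 6 (by decide)
    simp [map_add, map_sub, map_smul, coef_eps, Eform, smul_eq_mul] at this; linarith
  have h56 : a 5 6 = v 0 := by
    have := hc 5 6 (by decide)
    simp [map_add, map_sub, map_smul, coef_eps, Eform, smul_eq_mul] at this; linarith
  rw [hS, bigcalc v]
  congr 1
  simp only [Fin.sum_univ_seven, Fin.reduceLT, reduceIte]
  rw [h01, h02, h03, h04, h05, h06, h12, h13, h14, h15, h16, h23, h24, h25, h26, h34, h35, h36, h45, h46, h56]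
  ring
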